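/- arXiv:1704.01321 — 2 statements merged into one kernel-verified Lean document; each statement's English description precedes it below -/
import Mathlib

section
/- Let ϖ : sl_n(ℂ)³ → ℝ be the alternating 3-form ϖ(A,B,C) = 2i·tr(q(A)[q(B),q(C)]), where q(A) = (A + A*)/2 is the projection onto Hermitian traceless matrices, and let β : b_n × b_n → ℝ be β(x,y) = (i/4)·tr(x_u* y_u − x_u y_u*) on the Borel subalgebra b_n of upper-triangular traceless matrices, where x_u is the strictly upper-triangular part. Then the Chevalley–Eilenberg differential of β equals the restriction of ϖ to b_n: for all x,y,z ∈ b_n, −β([x,y],z) + β([x,z],y) − β([y,z],x) = ϖ(x,y,z). -/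
open Matrix Complex

/-- The strictly upper-triangular part of a matrix. -/
def strictUpper (n : ℕ) (x : Matrix (Fin n) (Fin n) ℂ) : Matrix (Fin n) (Fin n) ℂ :=
  Matrix.of fun k l => if (k : ℕ) < (l : ℕ) then x k l else 0

/-- The form `β(x,y) = (i/4)·tr(x_uᴴ y_u − x_u y_uᴴ)` on the Borel subalgebra. -/
noncomputable def betaForm (n : ℕ) (x y : Matrix (Fin n) (Fin n) ℂ) : ℂ :=
  Complex.I / 4 *
    ((strictUpper n x)ᴴ * strictUpper n y - strictUpper n x * (strictUpper n y)ᴴ).trace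

/-- The Hermitian projection `q(A) = (A + Aᴴ)/2`. -/
noncomputable def qHerm (n : ℕ) (A : Matrix (Fin n) (Fin n) ℂ) : Matrix (Fin n) (Fin n) ℂ :=
  ((1 : ℂ) / 2) • (A + Aᴴ)

/-- The volume 3-form `ϖ(A,B,C) = 2i·tr(q(A)[q(B),q(C)])`. -/
noncomputable def varpi (n : ℕ) (A B C : Matrix (Fin n) (Fin n) ℂ) : ℂ :=
  2 * Complex.I * (qHerm n A * (qHerm n B * qHerm n C - qHerm n C * qHerm n B)).trace

lemma bracket_strict {n : ℕ} {x y : Matrix (Fin n) (Fin n) ℂ}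
    (hx : ∀ k l : Fin n, (l : ℕ) < (k : ℕ) → x k l = 0)
    (hy : ∀ k l : Fin n, (l : ℕ) < (k : ℕ) → y k l = 0) :
    ∀ k l : Fin n, (l : ℕ) ≤ (k : ℕ) → (x * y - y * x) k l = 0 := by
  intro k l hkl
  rcases lt_or_eq_of_le hkl with h | h
  · have h1 : (x * y) k l = 0 := by
      rw [Matrix.mul_apply]
      apply Finset.sum_eq_zero
      intro j _
      rcases lt_or_ge (j : ℕ) (k : ℕ) with hj | hj
      · rw [hx k j hj, zero_mul]
      · rw [hy j l (lt_of_lt_of_le h hj), mul_zero]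
    have h2 : (y * x) k l = 0 := by
      rw [Matrix.mul_apply]
      apply Finset.sum_eq_zero
      intro j _
      rcases lt_or_ge (j : ℕ) (k : ℕ) with hj | hj
      · rw [hy k j hj, zero_mul]
      · rw [hx j l (lt_of_lt_of_le h hj), mul_zero]
    simp [Matrix.sub_apply, h1, h2]
  · have hkl' : k = l := Fin.ext h.symm
    subst hkl'
    have h1 : (x * y) k k = x k k * y k k := by
      rw [Matrix.mul_apply]
      apply Finset.sum_eq_single k
      · intro j _ hj
        rcases lt_or_ge (j : ℕ) (k : ℕ) with hj' | hj'
        · rw [hx k j hj', zero_mul]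
        · have : (k : ℕ) < j := lt_of_le_of_ne hj' (by simpa [Fin.ext_iff, eq_comm] using hj)
          rw [hy j k this, mul_zero]
      · intro h; exact absurd (Finset.mem_univ k) h
    have h2 : (y * x) k k = y k k * x k k := by
      rw [Matrix.mul_apply]
      apply Finset.sum_eq_single k
      · intro j _ hj
        rcases lt_or_ge (j : ℕ) (k : ℕ) with hj' | hj'
        · rw [hy k j hj', zero_mul]
        · have : (k : ℕ) < j := lt_of_le_of_ne hj' (by simpa [Fin.ext_iff, eq_comm] using hj)
          rw [hx j k this, mul_zero]
      · intro h; exact absurd (Finset.mem_univ k) h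
    simp [Matrix.sub_apply, h1, h2, mul_comm]

lemma su_eq {n : ℕ} {w : Matrix (Fin n) (Fin n) ℂ}
    (hw : ∀ k l : Fin n, (l : ℕ) ≤ (k : ℕ) → w k l = 0) :
    strictUpper n w = w := by
  ext k l
  simp only [strictUpper, Matrix.of_apply]
  split_ifs with h
  · rfl
  · exact (hw k l (le_of_not_gt h)).symm

lemma trace_upper_strict {n : ℕ} {x W : Matrix (Fin n) (Fin n) ℂ}
    (hx : ∀ k l : Fin n, (l : ℕ) < (k : ℕ) → x k l = 0)
    (hW : ∀ k l : Fin n, (l : ℕ) ≤ (k : ℕ) → W k l = 0) :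
    (x * W).trace = 0 := by
  rw [Matrix.trace]
  apply Finset.sum_eq_zero
  intro k _
  rw [Matrix.diag_apply, Matrix.mul_apply]
  apply Finset.sum_eq_zero
  intro j _
  rcases lt_or_ge (j : ℕ) (k : ℕ) with hj | hj
  · rw [hx k j hj, zero_mul]
  · rw [hW j k hj, mul_zero]

lemma trace_diag {n : ℕ} {A d : Matrix (Fin n) (Fin n) ℂ}
    (hA : ∀ k, A k k = 0) (hd : ∀ k l : Fin n, k ≠ l → d k l = 0) :
    (A * d).trace = 0 := by
  rw [Matrix.trace]
  apply Finset.sum_eq_zero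
  intro k _
  rw [Matrix.diag_apply, Matrix.mul_apply]
  apply Finset.sum_eq_zero
  intro j _
  by_cases h : j = k
  · subst h; rw [hA j, zero_mul]
  · rw [hd j k h, mul_zero]

/-- betaForm on (strictly upper, upper) pair -/
lemma betaForm_eq {n : ℕ} {W v : Matrix (Fin n) (Fin n) ℂ}
    (hW : ∀ k l : Fin n, (l : ℕ) ≤ (k : ℕ) → W k l = 0)
    (hv : ∀ k l : Fin n, (l : ℕ) < (k : ℕ) → v k l = 0) :
    betaForm n W v = Complex.I / 4 * ((Wᴴ * v).trace - (W * vᴴ).trace) := by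
  have hd : ∀ k l : Fin n, k ≠ l → (v - strictUpper n v) k l = 0 := by
    intro k l hkl
    simp only [Matrix.sub_apply, strictUpper, Matrix.of_apply]
    split_ifs with h
    · ring
    · have h' : (l : ℕ) < (k : ℕ) :=
        lt_of_le_of_ne (le_of_not_gt h) (fun e => hkl (Fin.ext e.symm))
      rw [hv k l h']; ring
  have e1 : (Wᴴ * strictUpper n v).trace = (Wᴴ * v).trace := by
    have h0 : (Wᴴ * (v - strictUpper n v)).trace = 0 :=
      trace_diag (fun k => by
        simp only [Matrix.conjTranspose_apply, hW k k (le_refl _), star_zero]) hd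
    rw [Matrix.mul_sub, Matrix.trace_sub] at h0
    exact (sub_eq_zero.mp h0).symm
  have e2 : (W * (strictUpper n v)ᴴ).trace = (W * vᴴ).trace := by
    have h0 : (W * (v - strictUpper n v)ᴴ).trace = 0 :=
      trace_diag (fun k => hW k k (le_refl _))
        (fun k l hkl => by
          simp only [Matrix.conjTranspose_apply]
          rw [hd l k (Ne.symm hkl), star_zero])
    rw [Matrix.conjTranspose_sub, Matrix.mul_sub, Matrix.trace_sub] at h0
    exact (sub_eq_zero.mp h0).symm
  rw [betaForm, su_eq hW, Matrix.trace_sub, e1, e2]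

/-- The Chevalley–Eilenberg differential of `β` equals the restriction of `ϖ`
to the Borel subalgebra of upper-triangular traceless matrices. -/
theorem d_betaForm_eq_varpi (n : ℕ) (x y z : Matrix (Fin n) (Fin n) ℂ)
    (hx : ∀ k l : Fin n, (l : ℕ) < (k : ℕ) → x k l = 0) (hxt : x.trace = 0)
    (hy : ∀ k l : Fin n, (l : ℕ) < (k : ℕ) → y k l = 0) (hyt : y.trace = 0)
    (hz : ∀ k l : Fin n, (l : ℕ) < (k : ℕ) → z k l = 0) (hzt : z.trace = 0) :
    -betaForm n (x * y - y * x) z + betaForm n (x * z - z * x) y -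
        betaForm n (y * z - z * y) x =
      varpi n x y z := by
  have hW1 := bracket_strict hx hy
  have hW2 := bracket_strict hx hz
  have hW3 := bracket_strict hy hz
  have cyc : ∀ a b c : Matrix (Fin n) (Fin n) ℂ,
      (a * (b * c)).trace = (b * (c * a)).trace := by
    intro a b c
    rw [Matrix.trace_mul_comm a (b * c), Matrix.mul_assoc]
  have F1 : (x * (y * z)).trace - (x * (z * y)).trace = 0 := by
    have h := trace_upper_strict hx hW3
    rwa [Matrix.mul_sub, Matrix.trace_sub] at h
  have g1 : (xᴴ * (yᴴ * zᴴ)).trace = star ((x * (z * y)).trace) := by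
    have h : xᴴ * (yᴴ * zᴴ) = (z * (y * x))ᴴ := by
      simp [Matrix.conjTranspose_mul, Matrix.mul_assoc]
    rw [h, Matrix.trace_conjTranspose, cyc z y x, cyc y x z]
  have g2 : (xᴴ * (zᴴ * yᴴ)).trace = star ((x * (y * z)).trace) := by
    have h : xᴴ * (zᴴ * yᴴ) = (y * (z * x))ᴴ := by
      simp [Matrix.conjTranspose_mul, Matrix.mul_assoc]
    rw [h, Matrix.trace_conjTranspose, cyc y z x, cyc z x y]
  have F2 : (xᴴ * (yᴴ * zᴴ)).trace - (xᴴ * (zᴴ * yᴴ)).trace = 0 := by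
    rw [g1, g2, ← star_sub]
    rw [show (x * (z * y)).trace - (x * (y * z)).trace
        = -((x * (y * z)).trace - (x * (z * y)).trace) by ring, F1]
    simp
  rw [betaForm_eq hW1 hz, betaForm_eq hW2 hy, betaForm_eq hW3 hx]
  simp only [varpi, qHerm]
  simp only [Matrix.conjTranspose_sub, Matrix.conjTranspose_mul, Matrix.conjTranspose_add,
    Matrix.conjTranspose_smul, Matrix.smul_mul, Matrix.mul_smul, Matrix.sub_mul,
    Matrix.mul_sub, Matrix.add_mul, Matrix.mul_add, Matrix.trace_sub, Matrix.trace_add,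
    Matrix.trace_smul, Matrix.mul_assoc, smul_eq_mul, smul_sub, smul_add, star_div₀,
    star_one, star_ofNat, RCLike.star_def, _root_.map_one, map_ofNat]
  linear_combination (Complex.I / 4) *
    (-(cyc y x zᴴ) + cyc z x yᴴ - cyc x yᴴ zᴴ + cyc x zᴴ yᴴ - cyc xᴴ y z + cyc xᴴ z y +
      cyc zᴴ xᴴ y - cyc yᴴ xᴴ z - F1 - F2)
end

section
/- Let V be a vector space over a field k with a family A of commuting-with-differential endomorphisms making V completely reducible as an A-module. Let V^♯ = {v ∈ V : Xv = 0 for all X ∈ A} and V⁰ the span of {Xv : X ∈ A, v ∈ V}. Then V = V^♯ ⊕ V⁰. -/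
/-- Cartier's lemma (part 1): if `V` is completely reducible with respect to a
family `A` of endomorphisms, then `V = V^♯ ⊕ V⁰`, where
`V^♯ = {v : Xv = 0 for all X ∈ A}` and `V⁰` is spanned by the `Xv`. -/
theorem cartier_decomposition (k : Type*) [Field k] (V : Type*) [AddCommGroup V]
    [Module k V] (A : Set (V →ₗ[k] V))
    (hsemisimple : ∀ W : Submodule k V, (∀ X ∈ A, W.map X ≤ W) →
      ∃ W' : Submodule k V, (∀ X ∈ A, W'.map X ≤ W') ∧ IsCompl W W') :
    IsCompl (⨅ X ∈ A, LinearMap.ker X) (⨆ X ∈ A, LinearMap.range X) := by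
  set K : Submodule k V := ⨅ X ∈ A, LinearMap.ker X with hK
  set R : Submodule k V := ⨆ X ∈ A, LinearMap.range X with hR
  have hKle : ∀ X ∈ A, K ≤ LinearMap.ker X := fun X hX =>
    biInf_le (f := fun X => LinearMap.ker X) hX
  have hRge : ∀ X ∈ A, LinearMap.range X ≤ R := fun X hX =>
    le_biSup (f := fun X => LinearMap.range X) hX
  have hRinv : ∀ X ∈ A, R.map X ≤ R := fun X hX =>
    le_trans (le_trans (Submodule.map_mono le_top)
      (by rw [Submodule.map_top])) (hRge X hX)
  constructor
  · -- disjoint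
    set D : Submodule k V := K ⊓ R with hD
    have hDinv : ∀ X ∈ A, D.map X ≤ D := by
      intro X hX
      have : D.map X ≤ ⊥ := by
        refine le_trans (Submodule.map_mono (le_trans inf_le_left (hKle X hX))) ?_
        intro v hv
        obtain ⟨w, hw, rfl⟩ := hv
        exact hw
      exact le_trans this bot_le
    obtain ⟨C, hCinv, hCcompl⟩ := hsemisimple D hDinv
    have hRleC : R ≤ C := by
      rw [hR]
      refine iSup_le fun X => iSup_le fun hX => ?_
      have : LinearMap.range X = (D ⊔ C).map X := by
        rw [hCcompl.sup_eq_top, Submodule.map_top]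
      rw [this, Submodule.map_sup]
      refine sup_le ?_ (hCinv X hX)
      refine le_trans (Submodule.map_mono (le_trans inf_le_left (hKle X hX))) ?_
      intro v hv
      obtain ⟨w, hw, rfl⟩ := hv
      simpa only [map_zero, LinearMap.mem_ker.mp hw] using C.zero_mem
    have h1 : D ≤ C := le_trans inf_le_right hRleC
    rw [disjoint_iff]
    exact le_antisymm (le_trans (le_inf le_rfl h1) hCcompl.disjoint.le_bot) bot_le
  · -- codisjoint
    obtain ⟨W, hWinv, hWcompl⟩ := hsemisimple R hRinv
    have hWleK : W ≤ K := by
      intro w hw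
      rw [hK]
      refine Submodule.mem_iInf _ |>.mpr fun X => Submodule.mem_iInf _ |>.mpr fun hX => ?_
      have h1 : X w ∈ W := hWinv X hX ⟨w, hw, rfl⟩
      have h2 : X w ∈ R := hRge X hX ⟨w, rfl⟩
      exact LinearMap.mem_ker.mpr
        (Submodule.disjoint_def.mp hWcompl.disjoint (X w) h2 h1)
    exact (hWcompl.codisjoint.mono_right hWleK).symm
end
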